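/- For 0 < q < p ≤ 1, any n ≥ 1, and any x ∈ [0,1], the revised (p,q)-Bernstein operator applied to f(t) = t² satisfies B_{n,p,q}(t²; x) = (p^{n−1}/[n]_{p,q})·x + (q·[n−1]_{p,q}/[n]_{p,q})·x². -/

import Mathlib

open Finset

noncomputable def pqInt (p q : ℝ) (m : ℕ) : ℝ := (p ^ m - q ^ m) / (p - q)

noncomputable def pqFact (p q : ℝ) (m : ℕ) : ℝ := ∏ j ∈ Finset.Icc 1 m, pqInt p q j

noncomputable def pqChoose (p q : ℝ) (n k : ℕ) : ℝ :=
  pqFact p q n / (pqFact p q k * pqFact p q (n - k))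

/-- The sample node `[k]_{p,q}/(p^{k-n}[n]_{p,q}) = p^{n-k}[k]_{p,q}/[n]_{p,q}`. -/
noncomputable def pqNode (p q : ℝ) (n k : ℕ) : ℝ :=
  p ^ (n - k) * pqInt p q k / pqInt p q n

/-- Basis function `b_{n,k}(x)` of the revised (p,q)-Bernstein operator. -/
noncomputable def pqBasis (p q : ℝ) (n k : ℕ) (x : ℝ) : ℝ :=
  (p ^ (n * (n - 1) / 2))⁻¹ * pqChoose p q n k * p ^ (k * (k - 1) / 2) * x ^ k *
    ∏ s ∈ Finset.range (n - k), (p ^ s - q ^ s * x)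

/-- The revised (p,q)-Bernstein operator. -/
noncomputable def pqBern (p q : ℝ) (n : ℕ) (f : ℝ → ℝ) (x : ℝ) : ℝ :=
  ∑ k ∈ Finset.range (n + 1), pqBasis p q n k x * f (pqNode p q n k)


private lemma tsucc (j : ℕ) : (j+1)*j/2 = j*(j-1)/2 + j := by
  cases j with
  | zero => rfl
  | succ i =>
    rw [show (i+1+1)*(i+1) = (i+1)*i + (i+1)*2 by ring,
        Nat.add_mul_div_right _ _ (by norm_num : (0:ℕ) < 2)]
    simp

private lemma pqInt_pos {p q : ℝ} (hq : 0 < q) (hqp : q < p) {m : ℕ} (hm : 1 ≤ m) :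
    0 < pqInt p q m := by
  unfold pqInt
  apply div_pos
  · have h := pow_lt_pow_left₀ hqp hq.le (by omega : m ≠ 0)
    linarith
  · linarith

private lemma pqFact_pos {p q : ℝ} (hq : 0 < q) (hqp : q < p) (m : ℕ) :
    0 < pqFact p q m :=
  Finset.prod_pos fun j hj => pqInt_pos hq hqp (Finset.mem_Icc.mp hj).1

private lemma pqFact_succ (p q : ℝ) (m : ℕ) :
    pqFact p q (m+1) = pqFact p q m * pqInt p q (m+1) := by
  rw [pqFact, pqFact, Finset.prod_Icc_succ_top (by omega : 1 ≤ m + 1)]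

private lemma pqInt_add {p q : ℝ} (hpq : p - q ≠ 0) (a b : ℕ) :
    pqInt p q (a+b) = p^a * pqInt p q b + q^b * pqInt p q a := by
  unfold pqInt
  field_simp
  ring

private lemma pqInt_succ {p q : ℝ} (hpq : p - q ≠ 0) (i : ℕ) :
    pqInt p q (i+1) = p^i + q * pqInt p q i := by
  unfold pqInt
  field_simp
  ring

private lemma pqChoose_zero {p q : ℝ} (hq : 0 < q) (hqp : q < p) (n : ℕ) :
    pqChoose p q n 0 = 1 := by
  unfold pqChoose
  rw [show pqFact p q 0 = 1 by simp [pqFact]]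
  rw [Nat.sub_zero, one_mul, div_self (pqFact_pos hq hqp n).ne']

private lemma pqChoose_self {p q : ℝ} (hq : 0 < q) (hqp : q < p) (n : ℕ) :
    pqChoose p q n n = 1 := by
  unfold pqChoose
  rw [Nat.sub_self, show pqFact p q 0 = 1 by simp [pqFact], mul_one,
    div_self (pqFact_pos hq hqp n).ne']

private lemma pqChoose_absorb {p q : ℝ} (hq : 0 < q) (hqp : q < p) (a b : ℕ) :
    pqChoose p q (a+1) (b+1) * pqInt p q (b+1) = pqInt p q (a+1) * pqChoose p q a b := by
  unfold pqChoose
  rw [show a+1-(b+1) = a - b by omega, pqFact_succ, pqFact_succ]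
  have h1 := (pqFact_pos hq hqp a).ne'
  have h2 := (pqFact_pos hq hqp b).ne'
  have h3 := (pqFact_pos hq hqp (a-b)).ne'
  have h4 := (pqInt_pos hq hqp (by omega : 1 ≤ b+1)).ne'
  field_simp

private lemma pqChoose_pascal {p q : ℝ} (hq : 0 < q) (hqp : q < p) {m i : ℕ} (him : i < m) :
    pqChoose p q (m+1) (i+1)
      = p^(i+1) * pqChoose p q m (i+1) + q^(m-i) * pqChoose p q m i := by
  have hpq : p - q ≠ 0 := by intro h; nlinarith [hqp]
  obtain ⟨d, rfl⟩ : ∃ d, m = i + 1 + d := ⟨m - (i+1), by omega⟩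
  have e1 : i+1+d+1 - (i+1) = d+1 := by omega
  have e2 : i+1+d - (i+1) = d := by omega
  have e3 : i+1+d - i = d+1 := by omega
  unfold pqChoose
  rw [e1, e2, e3, pqFact_succ p q (i+1+d), pqFact_succ p q i, pqFact_succ p q d]
  have h1 := (pqFact_pos hq hqp i).ne'
  have h2 := (pqFact_pos hq hqp d).ne'
  have h3 := (pqFact_pos hq hqp (i+1+d)).ne'
  have h4 := (pqInt_pos hq hqp (by omega : 1 ≤ i+1)).ne'
  have h5 := (pqInt_pos hq hqp (by omega : 1 ≤ d+1)).ne'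
  have key : pqInt p q (i+1+d+1) = p^(i+1) * pqInt p q (d+1) + q^(d+1) * pqInt p q (i+1) := by
    have := pqInt_add hpq (i+1) (d+1)
    rw [show i+1+(d+1) = i+1+d+1 by omega] at this
    exact this
  rw [key]
  field_simp

private lemma pq_partition {p q : ℝ} (hq : 0 < q) (hqp : q < p) (x : ℝ) (m : ℕ) :
    ∑ k ∈ Finset.range (m+1), pqChoose p q m k * p^(k*(k-1)/2) * x^k *
      ∏ s ∈ Finset.range (m-k), (p^s - q^s*x) = p^(m*(m-1)/2) := by
  induction m with
  | zero => simp [pqChoose, pqFact]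
  | succ m ih =>
    have key : ∀ i < m, pqChoose p q (m+1) (i+1) * p^((i+1)*((i+1)-1)/2) * x^(i+1) *
        ∏ s ∈ Finset.range (m+1-(i+1)), (p^s - q^s*x)
        = (pqChoose p q m (i+1) * p^((i+1)*((i+1)-1)/2) * x^(i+1) *
            (∏ s ∈ Finset.range (m-(i+1)), (p^s - q^s*x))
            * (p^(i+1) * (p^(m-(i+1)) - q^(m-(i+1))*x)))
          + (pqChoose p q m i * p^(i*(i-1)/2) * x^i *
            (∏ s ∈ Finset.range (m-i), (p^s - q^s*x)) * (p^i * q^(m-i) * x)) := by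
      intro i hi
      rw [pqChoose_pascal hq hqp hi]
      have e1 : m+1-(i+1) = m - i := by omega
      have e2 : m - i = (m - (i+1)) + 1 := by omega
      rw [e1, e2, Finset.prod_range_succ]
      have e4 : (p:ℝ)^((i+1)*((i+1)-1)/2) = p^(i*(i-1)/2) * p^i := by
        rw [Nat.add_sub_cancel, tsucc, pow_add]
      rw [e4]
      ring
    have hsplit : ∀ k < m + 1, (p:ℝ)^m * (pqChoose p q m k * p^(k*(k-1)/2) * x^k *
        ∏ s ∈ Finset.range (m-k), (p^s - q^s*x))
        = (pqChoose p q m k * p^(k*(k-1)/2) * x^k *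
            (∏ s ∈ Finset.range (m-k), (p^s - q^s*x)) * (p^k * (p^(m-k) - q^(m-k)*x)))
          + (pqChoose p q m k * p^(k*(k-1)/2) * x^k *
            (∏ s ∈ Finset.range (m-k), (p^s - q^s*x)) * (p^k * q^(m-k) * x)) := by
      intro k hk
      have e : (p:ℝ)^k * p^(m-k) = p^m := by rw [← pow_add]; congr 1; omega
      rw [← e]
      ring
    calc ∑ k ∈ Finset.range (m+1+1), pqChoose p q (m+1) k * p^(k*(k-1)/2) * x^k *
          ∏ s ∈ Finset.range (m+1-k), (p^s - q^s*x)
        = (∑ i ∈ Finset.range (m+1), pqChoose p q (m+1) (i+1) * p^((i+1)*((i+1)-1)/2) * x^(i+1) *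
            ∏ s ∈ Finset.range (m+1-(i+1)), (p^s - q^s*x))
          + pqChoose p q (m+1) 0 * p^(0*(0-1)/2) * x^0 *
            ∏ s ∈ Finset.range (m+1-0), (p^s - q^s*x) := by
          rw [Finset.sum_range_succ']
      _ = ((∑ i ∈ Finset.range m, pqChoose p q (m+1) (i+1) * p^((i+1)*((i+1)-1)/2) * x^(i+1) *
            ∏ s ∈ Finset.range (m+1-(i+1)), (p^s - q^s*x))
          + pqChoose p q (m+1) (m+1) * p^((m+1)*((m+1)-1)/2) * x^(m+1) *
            ∏ s ∈ Finset.range (m+1-(m+1)), (p^s - q^s*x))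
          + pqChoose p q (m+1) 0 * p^(0*(0-1)/2) * x^0 *
            ∏ s ∈ Finset.range (m+1-0), (p^s - q^s*x) := by
          rw [Finset.sum_range_succ]
      _ = ((∑ i ∈ Finset.range m,
            ((pqChoose p q m (i+1) * p^((i+1)*((i+1)-1)/2) * x^(i+1) *
              (∏ s ∈ Finset.range (m-(i+1)), (p^s - q^s*x))
              * (p^(i+1) * (p^(m-(i+1)) - q^(m-(i+1))*x)))
            + (pqChoose p q m i * p^(i*(i-1)/2) * x^i *
              (∏ s ∈ Finset.range (m-i), (p^s - q^s*x)) * (p^i * q^(m-i) * x))))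
          + pqChoose p q m m * p^(m*(m-1)/2) * x^m *
            (∏ s ∈ Finset.range (m-m), (p^s - q^s*x)) * (p^m * q^(m-m) * x))
          + pqChoose p q m 0 * p^(0*(0-1)/2) * x^0 *
            (∏ s ∈ Finset.range (m-0), (p^s - q^s*x)) * (p^0 * (p^(m-0) - q^(m-0)*x)) := by
          congr 1
          · congr 1
            · exact Finset.sum_congr rfl fun i hi => key i (Finset.mem_range.mp hi)
            · rw [pqChoose_self hq hqp, pqChoose_self hq hqp]
              rw [Nat.sub_self, Nat.add_sub_cancel,
                show (m+1)*m/2 = m*(m-1)/2 + m from tsucc m, pow_add]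
              simp
              ring
          · rw [pqChoose_zero hq hqp, pqChoose_zero hq hqp]
            rw [Nat.sub_zero, Nat.sub_zero, Finset.prod_range_succ]
            simp
      _ = ∑ k ∈ Finset.range (m+1),
            ((pqChoose p q m k * p^(k*(k-1)/2) * x^k *
              (∏ s ∈ Finset.range (m-k), (p^s - q^s*x)) * (p^k * (p^(m-k) - q^(m-k)*x)))
            + (pqChoose p q m k * p^(k*(k-1)/2) * x^k *
              (∏ s ∈ Finset.range (m-k), (p^s - q^s*x)) * (p^k * q^(m-k) * x))) := by
          rw [Finset.sum_add_distrib]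
          conv_rhs => rw [Finset.sum_add_distrib, Finset.sum_range_succ', Finset.sum_range_succ]
          ring
      _ = ∑ k ∈ Finset.range (m+1), (p:ℝ)^m * (pqChoose p q m k * p^(k*(k-1)/2) * x^k *
            ∏ s ∈ Finset.range (m-k), (p^s - q^s*x)) :=
          (Finset.sum_congr rfl fun k hk => (hsplit k (Finset.mem_range.mp hk)).symm)
      _ = p^((m+1)*((m+1)-1)/2) := by
          rw [← Finset.mul_sum, ih, Nat.add_sub_cancel,
            show (m+1)*m/2 = m*(m-1)/2 + m from tsucc m, pow_add]
          ring

theorem pqBern_sq (p q : ℝ) (n : ℕ) (hn : 1 ≤ n)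
    (hq : 0 < q) (hqp : q < p) (hp : p ≤ 1) (x : ℝ) (hx : x ∈ Set.Icc (0:ℝ) 1) :
    pqBern p q n (fun t => t ^ 2) x =
      (p ^ (n - 1) / pqInt p q n) * x + (q * pqInt p q (n - 1) / pqInt p q n) * x ^ 2 := by
  have hp0 : (0:ℝ) < p := lt_trans hq hqp
  have hpq : p - q ≠ 0 := sub_ne_zero.mpr hqp.ne'
  have hbern : pqBern p q n (fun t => t ^ 2) x
      = ∑ k ∈ Finset.range (n+1), pqBasis p q n k x * (pqNode p q n k)^2 := by
    simp [pqBern]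
  rw [hbern]
  match n, hn with
  | 1, _ =>
    have h1 : pqInt p q 1 = 1 := by simp [pqInt]; exact hpq
    have h0 : pqInt p q 0 = 0 := by simp [pqInt]
    have hF0 : pqFact p q 0 = 1 := by simp [pqFact]
    have hF1 : pqFact p q 1 = 1 := by simp [pqFact]; exact h1
    simp only [Finset.sum_range_succ, Finset.sum_range_zero, zero_add]
    rw [show pqNode p q 1 0 = 0 by simp [pqNode, h0],
        show pqNode p q 1 1 = 1 by simp [pqNode, h1],
        show pqBasis p q 1 1 x = x by
          simp [pqBasis, pqChoose, hF0, hF1]]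
    simp [h0, h1]
  | (m+2), _ =>
    have hN : pqInt p q (m+2) ≠ 0 := (pqInt_pos hq hqp (by omega)).ne'
    have hN1 : pqInt p q (m+1) ≠ 0 := (pqInt_pos hq hqp (by omega)).ne'
    have hP : (p:ℝ)^((m+2)*(m+1)/2) ≠ 0 := pow_ne_zero _ hp0.ne'
    have h0int : pqInt p q 0 = 0 := by simp [pqInt]
    rw [Finset.sum_range_succ']
    rw [show pqBasis p q (m+2) 0 x * (pqNode p q (m+2) 0)^2 = 0 by
      simp [pqNode, h0int], add_zero]
    have key : ∀ i ∈ Finset.range (m+2),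
        pqBasis p q (m+2) (i+1) x * (pqNode p q (m+2) (i+1))^2
        = ((p^((m+2)*(m+1)/2))⁻¹ * p^(2*m+2) * x / pqInt p q (m+2)) *
            (pqChoose p q (m+1) i * p^(i*(i-1)/2) * x^i *
              ∏ s ∈ Finset.range (m+1-i), (p^s - q^s*x))
          + ((p^((m+2)*(m+1)/2))⁻¹ * q / pqInt p q (m+2)) *
            (pqInt p q i * pqChoose p q (m+1) i * (p^((i+1)*i/2) * (p^(m+1-i))^2) * x^(i+1) *
              ∏ s ∈ Finset.range (m+1-i), (p^s - q^s*x)) := by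
      intro i hi
      have him : i ≤ m + 1 := by have := Finset.mem_range.mp hi; omega
      have habs : pqChoose p q (m+2) (i+1) * pqInt p q (i+1)
          = pqInt p q (m+2) * pqChoose p q (m+1) i := pqChoose_absorb hq hqp (m+1) i
      have hstep : pqInt p q (i+1) = p^i + q * pqInt p q i := pqInt_succ hpq i
      rw [pqBasis, pqNode]
      rw [show m+2-(i+1) = m+1-i by omega]
      rw [show (m+2)*((m+2)-1)/2 = (m+2)*(m+1)/2 by norm_num]
      rw [show (i+1)*((i+1)-1)/2 = (i+1)*i/2 by norm_num]
      have e1 : (p:ℝ)^((i+1)*i/2) = p^(i*(i-1)/2) * p^i := by rw [tsucc, pow_add]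
      have e2 : (p:ℝ)^(2*m+2) = (p^(m+1-i) * p^i)^2 := by
        rw [← pow_add, ← pow_mul]; congr 1; omega
      have hI1 : pqInt p q (i+1) ≠ 0 := (pqInt_pos hq hqp (by omega : 1 ≤ i+1)).ne'
      have hC : pqChoose p q (m+2) (i+1)
          = pqInt p q (m+2) * pqChoose p q (m+1) i / pqInt p q (i+1) := by
        field_simp
        linear_combination habs
      rw [e1, e2, hC, hstep]
      have hI1' : (p:ℝ)^i + q * pqInt p q i ≠ 0 := by rw [← hstep]; exact hI1
      field_simp
      ring
    rw [Finset.sum_congr rfl key, Finset.sum_add_distrib, ← Finset.mul_sum, ← Finset.mul_sum]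
    rw [pq_partition hq hqp x (m+1)]
    rw [Finset.sum_range_succ'
      (fun i => pqInt p q i * pqChoose p q (m+1) i * (p^((i+1)*i/2) * (p^(m+1-i))^2) * x^(i+1) *
        ∏ s ∈ Finset.range (m+1-i), (p^s - q^s*x)) (m+1)]
    have key2 : ∀ j ∈ Finset.range (m+1),
        pqInt p q (j+1) * pqChoose p q (m+1) (j+1) *
          (p^((j+1+1)*(j+1)/2) * (p^(m+1-(j+1)))^2) * x^(j+1+1) *
          ∏ s ∈ Finset.range (m+1-(j+1)), (p^s - q^s*x)
        = (pqInt p q (m+1) * p^(2*m+1) * x^2) *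
            (pqChoose p q m j * p^(j*(j-1)/2) * x^j *
              ∏ s ∈ Finset.range (m-j), (p^s - q^s*x)) := by
      intro j hj
      have hjm : j ≤ m := by have := Finset.mem_range.mp hj; omega
      have habs2 : pqChoose p q (m+1) (j+1) * pqInt p q (j+1)
          = pqInt p q (m+1) * pqChoose p q m j := pqChoose_absorb hq hqp m j
      rw [show m+1-(j+1) = m-j by omega]
      have eE : (p:ℝ)^((j+1+1)*(j+1)/2) * (p^(m-j))^2 = p^(j*(j-1)/2) * p^(2*m+1) := by
        rw [← pow_mul, ← pow_add, ← pow_add]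
        congr 1
        have h1 := tsucc (j+1)
        have h2 := tsucc j
        simp only [Nat.add_sub_cancel] at h1
        rw [h1, h2]
        generalize j*(j-1)/2 = a
        omega
      calc pqInt p q (j+1) * pqChoose p q (m+1) (j+1) *
            (p^((j+1+1)*(j+1)/2) * (p^(m-j))^2) * x^(j+1+1) *
            ∏ s ∈ Finset.range (m-j), (p^s - q^s*x)
          = (pqChoose p q (m+1) (j+1) * pqInt p q (j+1)) *
            (p^((j+1+1)*(j+1)/2) * (p^(m-j))^2) * x^(j+1+1) *
            ∏ s ∈ Finset.range (m-j), (p^s - q^s*x) := by ring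
        _ = (pqInt p q (m+1) * pqChoose p q m j) *
            (p^(j*(j-1)/2) * p^(2*m+1)) * x^(j+1+1) *
            ∏ s ∈ Finset.range (m-j), (p^s - q^s*x) := by rw [habs2, eE]
        _ = (pqInt p q (m+1) * p^(2*m+1) * x^2) *
            (pqChoose p q m j * p^(j*(j-1)/2) * x^j *
              ∏ s ∈ Finset.range (m-j), (p^s - q^s*x)) := by ring
    rw [Finset.sum_congr rfl key2, ← Finset.mul_sum, pq_partition hq hqp x m]
    rw [show pqInt p q 0 * pqChoose p q (m+1) 0 * (p^((0+1)*0/2) * (p^(m+1-0))^2) * x^(0+1) *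
          ∏ s ∈ Finset.range (m+1-0), (p^s - q^s*x) = 0 by rw [h0int]; ring]
    have E1 : (p:ℝ)^(2*m+2) * p^((m+1)*((m+1)-1)/2) = p^((m+2)*(m+1)/2) * p^(m+1) := by
      rw [← pow_add, ← pow_add]
      congr 1
      have h1 := tsucc (m+1)
      simp only [Nat.add_sub_cancel] at h1 ⊢
      rw [h1]
      have h2 := tsucc m
      rw [h2]
      generalize m*(m-1)/2 = a
      omega
    have E2 : (p:ℝ)^(2*m+1) * p^(m*(m-1)/2) = p^((m+2)*(m+1)/2) := by
      rw [← pow_add]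
      congr 1
      have h1 := tsucc (m+1)
      simp only [Nat.add_sub_cancel] at h1
      rw [h1, tsucc m]
      generalize m*(m-1)/2 = a
      omega
    rw [show m+2-1 = m+1 by omega]
    have F1 : ((p:ℝ)^((m+2)*(m+1)/2))⁻¹ * p^(2*m+2) * p^((m+1)*((m+1)-1)/2) = p^(m+1) := by
      rw [mul_assoc, E1, ← mul_assoc, inv_mul_cancel₀ hP, one_mul]
    have F2 : ((p:ℝ)^((m+2)*(m+1)/2))⁻¹ * (p^(2*m+1) * p^(m*(m-1)/2)) = 1 := by
      rw [E2, inv_mul_cancel₀ hP]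
    linear_combination (x / pqInt p q (m+2)) * F1
      + (q * pqInt p q (m+1) * x^2 / pqInt p q (m+2)) * F2
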